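/- For k ≥ 3, define f : 2^{[k]} → [k] by: f(S) = 1 if |S| = 1; f(∅) = 2; f(S) = k if |S| ≥ k; otherwise f(S) = max over x ∈ S of max(3, x). Then for every partition of [k] into k+1 (possibly empty) parts A_1,...,A_{k+1}, the sequence f(A_1),...,f(A_{k+1}) has a unique maximum. -/

import Mathlib

lemma sup_eq_max3' {k : ℕ} (S : Finset (Fin k)) (hS : S.Nonempty) :
    S.sup (fun x => max 3 ((x : ℕ) + 1)) = max 3 ((S.max' hS : ℕ) + 1) := by
  apply le_antisymm
  · apply Finset.sup_le
    intro x hx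
    have hx' : (x : ℕ) ≤ (S.max' hS : ℕ) := S.le_max' x hx
    omega
  · exact Finset.le_sup (f := fun x : Fin k => max 3 ((x : ℕ) + 1)) (b := S.max' hS) (S.max'_mem hS)

lemma aux13 {k : ℕ} (hk : 3 ≤ k) (S T : Finset (Fin k))
    (hS : S.Nonempty) (hT : T.Nonempty)
    (hd : Disjoint S T) (hS2 : 2 ≤ S.card) (hT2 : 2 ≤ T.card)
    (hlt : S.max' hS < T.max' hT)
    (heq : S.sup (fun x => max 3 ((x : ℕ) + 1)) = T.sup (fun x => max 3 ((x : ℕ) + 1))) :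
    False := by
  rw [sup_eq_max3' S hS, sup_eq_max3' T hT] at heq
  have hmn : ((S.max' hS : ℕ)) < ((T.max' hT : ℕ)) := hlt
  have hn2 : (T.max' hT : ℕ) ≤ 2 := by omega
  have hmem : ∀ x ∈ S ∪ T, (x : ℕ) ≤ 2 := by
    intro x hx
    rcases Finset.mem_union.mp hx with h | h
    · have h' : (x : ℕ) ≤ (S.max' hS : ℕ) := S.le_max' x h
      omega
    · have h' : (x : ℕ) ≤ (T.max' hT : ℕ) := T.le_max' x h
      omega
  have hcard : (S ∪ T).card ≤ 3 := by
    have := Finset.card_le_card_of_injOn (fun x : Fin k => (x : ℕ))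
      (fun x hx => Finset.mem_range.mpr (by have := hmem x hx; show (x:ℕ) < 3; omega))
      (fun a _ b _ h => Fin.val_injective h)
    simpa using this
  have h4 : 4 ≤ (S ∪ T).card := by
    rw [Finset.card_union_of_disjoint hd]; omega
  omega

theorem stmt13 (k : ℕ) (hk : 3 ≤ k)
    (f : Finset (Fin k) → ℕ)
    (hf : ∀ S : Finset (Fin k),
      f S = if S.card = 1 then 1
            else if S = ∅ then 2
            else if k ≤ S.card then k
            else S.sup (fun x => max 3 ((x : ℕ) + 1)))
    (A : Fin (k + 1) → Finset (Fin k))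
    (hdisj : ∀ i j, i ≠ j → Disjoint (A i) (A j))
    (hcover : ∀ x, ∃ i, x ∈ A i) :
    ∃ i, ∀ j, j ≠ i → f (A j) < f (A i) := by
  -- basic value facts
  have hempty : ∀ S : Finset (Fin k), S = ∅ → f S = 2 := by
    intro S hS
    rw [hf S, hS]; simp
  have hone : ∀ S : Finset (Fin k), S.card = 1 → f S = 1 := by
    intro S hS
    rw [hf S]; simp [hS]
  have hbigv : ∀ S : Finset (Fin k), k ≤ S.card → f S = k := by
    intro S hS
    rw [hf S]
    have h1 : S.card ≠ 1 := by omega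
    have h2 : S ≠ ∅ := by
      intro h; rw [h] at hS; simp at hS; omega
    simp [h1, h2, hS]
  have hmid : ∀ S : Finset (Fin k), 2 ≤ S.card → S.card < k →
      f S = S.sup (fun x => max 3 ((x : ℕ) + 1)) := by
    intro S h2 hlt
    rw [hf S]
    have h1 : S.card ≠ 1 := by omega
    have he : S ≠ ∅ := by
      intro h; rw [h] at h2; simp at h2
    have hb : ¬ k ≤ S.card := by omega
    simp [h1, he, hb]
  have hmid3 : ∀ S : Finset (Fin k), 2 ≤ S.card → S.card < k → 3 ≤ f S := by
    intro S h2 hlt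
    rw [hmid S h2 hlt]
    obtain ⟨x, hx⟩ := Finset.card_pos.mp (show 0 < S.card by omega)
    calc (3 : ℕ) ≤ max 3 ((x : ℕ) + 1) := le_max_left _ _
      _ ≤ _ := Finset.le_sup (f := fun x : Fin k => max 3 ((x : ℕ) + 1)) (b := x) hx
  -- pick argmax
  obtain ⟨i, hi⟩ := Finite.exists_max (fun l => f (A l))
  refine ⟨i, fun j hj => ?_⟩
  rcases lt_or_eq_of_le (hi j) with h | h
  · exact h
  exfalso
  -- rule out big parts
  have hbigfalse : ∀ a b : Fin (k+1), a ≠ b → k ≤ (A a).card →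
      f (A a) = f (A b) → False := by
    intro a b hab ha heq
    have hAa : A a = Finset.univ :=
      Finset.eq_univ_of_card _ (le_antisymm (Finset.card_le_univ _) (by simpa using ha))
    have hAb : A b = ∅ := by
      have hd := hdisj b a (Ne.symm hab)
      rw [hAa] at hd
      exact Finset.eq_empty_of_forall_notMem fun x hx =>
        Finset.disjoint_left.mp hd hx (Finset.mem_univ x)
    have h1 := hbigv (A a) ha
    have h2 := hempty (A b) hAb
    omega
  have hki : ¬ k ≤ (A i).card := fun hc =>
    hbigfalse i j (Ne.symm hj) hc h.symm
  have hkj : ¬ k ≤ (A j).card := fun hc =>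
    hbigfalse j i hj hc h
  -- pigeonhole 1 : not all parts nonempty
  have hpig1 : ¬ (∀ l, (A l).Nonempty) := by
    intro hne
    choose g hg using hne
    have hinj : Function.Injective g := by
      intro a b hab
      by_contra hne'
      exact (Finset.disjoint_left.mp (hdisj a b hne') (hg a)) (hab ▸ hg b)
    have hcle := Fintype.card_le_of_injective g hinj
    simp only [Fintype.card_fin] at hcle
    omega
  -- main case analysis on card (A i)
  rcases Nat.lt_or_ge (A i).card 2 with hci | hci
  · interval_cases hc : (A i).card
    · -- A i empty, so f (A i) = 2, so A j empty too
      have hAi : A i = ∅ := Finset.card_eq_zero.mp hc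
      have hfi : f (A i) = 2 := hempty _ hAi
      have hAj : A j = ∅ := by
        by_contra hne
        rcases Nat.lt_or_ge (A j).card 2 with hcj | hcj
        · have hcj1 : (A j).card = 1 := by
            rcases Nat.lt_or_ge (A j).card 1 with h0 | h1
            · exact absurd (Finset.card_eq_zero.mp (by omega)) hne
            · omega
          have := hone _ hcj1
          omega
        · have := hmid3 _ hcj (by omega)
          omega
      -- all other parts have card ≤ 1 (else f ≥ 3 > 2 contradicts max)
      have hsmall : ∀ l, (A l).card ≤ 1 := by
        intro l
        by_contra hc2
        push_neg at hc2
        have hlk : (A l).card < k := by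
          by_contra hge
          push_neg at hge
          have := hbigv _ hge
          have := hi l
          omega
        have := hmid3 _ (by omega) hlk
        have := hi l
        omega
      -- pigeonhole: k elements into ≤ k-1 nonempty parts of size ≤ 1
      choose c hc using hcover
      have hmaps : ∀ x : Fin k, c x ∈ (Finset.univ.erase i).erase j := by
        intro x
        refine Finset.mem_erase.mpr ⟨?_, Finset.mem_erase.mpr ⟨?_, Finset.mem_univ _⟩⟩
        · intro hcx
          have := hc x
          rw [hcx, hAj] at this
          simp at this
        · intro hcx
          have := hc x
          rw [hcx, hAi] at this
          simp at this
      have hinj : Set.InjOn c (Finset.univ : Finset (Fin k)) := by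
        intro x _ y _ hxy
        exact Finset.card_le_one.mp (hsmall (c x)) x (hc x) y (hxy ▸ hc y)
      have hle := Finset.card_le_card_of_injOn c (fun x _ => hmaps x) hinj
      have hji : j ∈ Finset.univ.erase i := Finset.mem_erase.mpr ⟨hj, Finset.mem_univ _⟩
      rw [Finset.card_erase_of_mem hji, Finset.card_erase_of_mem (Finset.mem_univ i)] at hle
      simp only [Finset.card_univ, Fintype.card_fin] at hle
      omega
    · -- A i singleton, f (A i) = 1, but some part has f ≥ 2
      have hfi : f (A i) = 1 := hone _ hc
      by_cases hne : ∀ l, (A l).Nonempty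
      · exact hpig1 hne
      · push_neg at hne
        obtain ⟨l, hl⟩ := hne
        have : f (A l) = 2 := hempty _ hl
        have := hi l
        omega
  · -- card (A i) ≥ 2, f (A i) ≥ 3, so A j also has 2 ≤ card < k
    have hfi3 : 3 ≤ f (A i) := hmid3 _ hci (by omega)
    have hcj : 2 ≤ (A j).card := by
      by_contra hc2
      push_neg at hc2
      interval_cases hcj' : (A j).card
      · have := hempty _ (Finset.card_eq_zero.mp hcj')
        omega
      · have := hone _ hcj'
        omega
    have hSi : (A i).Nonempty := Finset.card_pos.mp (by omega)
    have hSj : (A j).Nonempty := Finset.card_pos.mp (by omega)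
    have heq : (A j).sup (fun x => max 3 ((x : ℕ) + 1))
        = (A i).sup (fun x => max 3 ((x : ℕ) + 1)) := by
      rw [← hmid _ hcj (by omega), ← hmid _ hci (by omega)]
      exact h
    have hd := hdisj j i hj
    have hmax_ne : (A j).max' hSj ≠ (A i).max' hSi := by
      intro hmm
      exact (Finset.disjoint_left.mp hd ((A j).max'_mem hSj))
        (hmm ▸ (A i).max'_mem hSi)
    rcases lt_or_gt_of_ne hmax_ne with hlt | hlt
    · exact aux13 hk (A j) (A i) hSj hSi hd hcj hci hlt heq
    · exact aux13 hk (A i) (A j) hSi hSj hd.symm hci hcj hlt heq.symm
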